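/- Let a,b,A,B ∈ ℕ with b > 0, B > 0, gcd(a,b) = 1, let h,k ∈ ℕ with k > 0, gcd(h,k) = 1, and suppose b | k and gcd(k,B) | (ak/b + Ah). Set k' = k/gcd(k,B). Then the congruence ak/b + Ah + Bhn ≡ 0 (mod k) has a solution n ∈ ℤ which is unique modulo k'; consequently there exists n₀ ∈ {1, …, k'} with ζ_b^a ζ_k^{h(A + Bn₀)} = 1, and (ζ_b^a ζ_k^{hA}; ζ_k^{hB})_n = 0 for every n > n₀. -/

import Mathlib

open Complex Filter Finset

/-- `e2pi r = e^{2 π i r}`; thus `ζ_k^h = e2pi (h/k)`. -/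
noncomputable def e2pi (r : ℝ) : ℂ := Complex.exp (2 * Real.pi * Complex.I * r)

/-- The finite q-Pochhammer symbol `(a;q)_n = ∏_{j=0}^{n-1} (1 - a q^j)`. -/
noncomputable def qPoch (a q : ℂ) (n : ℕ) : ℂ := ∏ j ∈ Finset.range n, (1 - a * q ^ j)

/-- The infinite q-Pochhammer symbol `(a;q)_∞ = ∏_{j=0}^{∞} (1 - a q^j)`. -/
noncomputable def qPochInf (a q : ℂ) : ℂ := ∏' j : ℕ, (1 - a * q ^ j)

/-- The Jacobi triple product `j(x,q) = (x;q)_∞ (q/x;q)_∞ (q;q)_∞`. -/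
noncomputable def jac (x q : ℂ) : ℂ := qPochInf x q * qPochInf (q / x) q * qPochInf q q

/-- The universal mock theta function
`g₃(x,q) = ∑_{n≥1} q^{n(n-1)} / ((x;q)_n (q/x;q)_n)` (indexed here by `n+1`, `n : ℕ`). -/
noncomputable def g₃ (x q : ℂ) : ℂ :=
  ∑' n : ℕ, q ^ (n * (n + 1)) / (qPoch x q (n + 1) * qPoch (q / x) q (n + 1))

/-- `qrad h k t = ζ_k^h e^{-t}`. -/
noncomputable def qrad (h k : ℕ) (t : ℝ) : ℂ := e2pi ((h : ℝ) / k) * Real.exp (-t)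

/-- `srad h k B t = e^{π i h B / k} e^{-tB/2}`, a square root of `(qrad h k t)^B`. -/
noncomputable def srad (h k B : ℕ) (t : ℝ) : ℂ :=
  Complex.exp (Real.pi * Complex.I * ((h : ℝ) * B / k)) * Real.exp (-(t * B / 2))

/-- The Appell–Lerch sum `m(X,q,z)`. -/
noncomputable def appellM (X q z : ℂ) : ℂ :=
  (1 / jac z q) * ∑' n : ℤ, (-z) ^ n * q ^ ((n * (n - 1)) / 2) / (1 - X * z * q ^ (n - 1))

lemma e2pi_add (r s : ℝ) : e2pi (r + s) = e2pi r * e2pi s := by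
  simp only [e2pi, ← Complex.exp_add]
  congr 1
  push_cast
  ring

lemma e2pi_int (m : ℤ) : e2pi (m : ℝ) = 1 := by
  have : (2 * Real.pi * Complex.I * ((m : ℝ) : ℂ)) = (m : ℂ) * (2 * Real.pi * Complex.I) := by
    push_cast; ring
  rw [e2pi, this, Complex.exp_int_mul_two_pi_mul_I]

lemma e2pi_nat (m : ℕ) : e2pi (m : ℝ) = 1 := by
  have := e2pi_int (m : ℤ)
  simpa using this

lemma e2pi_pow (r : ℝ) (m : ℕ) : e2pi r ^ m = e2pi (m * r) := by
  rw [e2pi, e2pi, ← Complex.exp_nat_mul]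
  congr 1
  push_cast
  ring

theorem stmt9 (a b A B : ℕ) (hb : 0 < b) (hBpos : 0 < B) (hab : Nat.gcd a b = 1)
    (h k : ℕ) (hk : 0 < k) (hhk : Nat.gcd h k = 1)
    (hbk : b ∣ k) (hdvd : Nat.gcd k B ∣ (a * k / b + A * h)) :
    (∃ n : ℤ, ((a * k / b + A * h : ℕ) : ℤ) + (B : ℤ) * (h : ℤ) * n ≡ 0 [ZMOD (k : ℤ)] ∧
      ∀ m : ℤ, ((a * k / b + A * h : ℕ) : ℤ) + (B : ℤ) * (h : ℤ) * m ≡ 0 [ZMOD (k : ℤ)] →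
        m ≡ n [ZMOD ((k / Nat.gcd k B : ℕ) : ℤ)]) ∧
    ∃ n₀ ∈ Finset.Icc 1 (k / Nat.gcd k B),
      e2pi ((a : ℝ) / b) * e2pi ((h : ℝ) * ((A : ℝ) + (B : ℝ) * n₀) / k) = 1 ∧
      ∀ n : ℕ, n₀ < n →
        qPoch (e2pi ((a : ℝ) / b) * e2pi ((h : ℝ) * A / k)) (e2pi ((h : ℝ) * B / k)) n = 0 := by
  set d := Nat.gcd k B with hd
  set k' := k / d with hk'def
  set c := a * k / b + A * h with hc
  have hdpos : 0 < d := Nat.gcd_pos_of_pos_left B hk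
  have hdk : d ∣ k := Nat.gcd_dvd_left k B
  have hdB : d ∣ B := Nat.gcd_dvd_right k B
  have hk'pos : 0 < k' := Nat.div_pos (Nat.le_of_dvd hk hdk) hdpos
  have hkk' : k = d * k' := (Nat.mul_div_cancel' hdk).symm
  obtain ⟨B', hB'⟩ := hdB
  obtain ⟨c', hc'⟩ := hdvd
  have hgcdnat : Nat.gcd k (B * h) = d := Nat.Coprime.gcd_mul_right_cancel_right B hhk
  have hgcdint : Int.gcd (k : ℤ) ((B * h : ℕ) : ℤ) = d := by
    rw [Int.gcd_natCast_natCast]; exact hgcdnat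
  set u := Int.gcdA (k : ℤ) ((B * h : ℕ) : ℤ) with hu
  set v := Int.gcdB (k : ℤ) ((B * h : ℕ) : ℤ) with hv
  have hbez : (d : ℤ) = (k : ℤ) * u + ((B * h : ℕ) : ℤ) * v := by
    rw [← hgcdint]; exact Int.gcd_eq_gcd_ab _ _
  set n : ℤ := -(v * (c' : ℤ)) with hn
  have hsol : (k : ℤ) ∣ (c : ℤ) + (B : ℤ) * (h : ℤ) * n := by
    refine ⟨u * (c' : ℤ), ?_⟩
    have hcz : (c : ℤ) = (d : ℤ) * (c' : ℤ) := by exact_mod_cast hc'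
    rw [hcz, hn]
    push_cast at hbez ⊢
    linear_combination (c' : ℤ) * hbez
  have huniq : ∀ m : ℤ, (k : ℤ) ∣ (B : ℤ) * (h : ℤ) * (m - n) → (k' : ℤ) ∣ m - n := by
    intro m hm
    have hkz : (k : ℤ) = (d : ℤ) * (k' : ℤ) := by exact_mod_cast hkk'
    have hBz : (B : ℤ) = (d : ℤ) * (B' : ℤ) := by exact_mod_cast hB'
    rw [hkz, hBz] at hm
    have hd0 : (d : ℤ) ≠ 0 := by exact_mod_cast hdpos.ne'
    have hm2 : (k' : ℤ) ∣ (B' : ℤ) * (h : ℤ) * (m - n) := by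
      refine (mul_dvd_mul_iff_left hd0).mp ?_
      rw [show (d : ℤ) * ((B' : ℤ) * (h : ℤ) * (m - n)) =
        (d : ℤ) * (B' : ℤ) * (h : ℤ) * (m - n) by ring]
      exact hm
    have hcop : Nat.Coprime k' (B' * h) := by
      have h1 : Nat.Coprime k' B' := by
        have h3 := Nat.coprime_div_gcd_div_gcd (m := k) (n := B) hdpos
        have hB'eq : B / d = B' := by rw [hB']; exact Nat.mul_div_cancel_left B' hdpos
        rwa [hB'eq] at h3
      have h2 : Nat.Coprime k' h := Nat.Coprime.coprime_dvd_left
        (Nat.div_dvd_of_dvd hdk) (Nat.coprime_comm.mp hhk)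
      exact Nat.Coprime.mul_right h1 h2
    have hcopZ : IsCoprime (k' : ℤ) (((B' * h : ℕ)) : ℤ) := by
      rw [Int.isCoprime_iff_gcd_eq_one, Int.gcd_natCast_natCast]
      exact hcop
    refine hcopZ.dvd_of_dvd_mul_left ?_
    rw [show ((B' * h : ℕ) : ℤ) * (m - n) = (B' : ℤ) * (h : ℤ) * (m - n) by push_cast; ring]
    exact hm2
  constructor
  · refine ⟨n, Int.modEq_zero_iff_dvd.mpr hsol, ?_⟩
    intro m hm
    have hm' : (k : ℤ) ∣ (c : ℤ) + (B : ℤ) * (h : ℤ) * m := Int.modEq_zero_iff_dvd.mp hm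
    have hsub : (k : ℤ) ∣ (B : ℤ) * (h : ℤ) * (m - n) := by
      have h4 := dvd_sub hm' hsol
      rw [show (c : ℤ) + (B : ℤ) * h * m - ((c : ℤ) + (B : ℤ) * h * n)
        = (B : ℤ) * h * (m - n) by ring] at h4
      exact h4
    have h5 := huniq m hsub
    exact Int.ModEq.symm (Int.modEq_of_dvd (by simpa using h5))
  · set n₀ : ℕ := ((n - 1) % (k' : ℤ)).toNat + 1 with hn₀
    have hk'z : (0 : ℤ) < (k' : ℤ) := by exact_mod_cast hk'pos
    have hmod1 : 0 ≤ (n - 1) % (k' : ℤ) := Int.emod_nonneg _ hk'z.ne'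
    have hmod2 : (n - 1) % (k' : ℤ) < (k' : ℤ) := Int.emod_lt_of_pos _ hk'z
    have hn₀Icc : n₀ ∈ Finset.Icc 1 k' := by
      rw [Finset.mem_Icc]
      omega
    have hcongr : (k' : ℤ) ∣ (n₀ : ℤ) - n := by
      have heq : ((n₀ : ℤ)) - n = ((n - 1) % (k' : ℤ)) - (n - 1) := by
        rw [hn₀]
        push_cast [Int.toNat_of_nonneg hmod1]
        ring
      rw [heq, Int.emod_def]
      exact ⟨-((n - 1) / (k' : ℤ)), by ring⟩
    obtain ⟨t, ht⟩ := hcongr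
    have hsol₀ : (k : ℤ) ∣ (c : ℤ) + (B : ℤ) * (h : ℤ) * (n₀ : ℤ) := by
      obtain ⟨s, hs⟩ := hsol
      refine ⟨s + (B' : ℤ) * (h : ℤ) * t, ?_⟩
      have hkz : (k : ℤ) = (d : ℤ) * (k' : ℤ) := by exact_mod_cast hkk'
      have hBz : (B : ℤ) = (d : ℤ) * (B' : ℤ) := by exact_mod_cast hB'
      have hsplit : (c : ℤ) + (B : ℤ) * h * (n₀ : ℤ)
          = ((c : ℤ) + (B : ℤ) * h * n) + (B : ℤ) * h * ((n₀ : ℤ) - n) := by ring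
      rw [hsplit, hs, ht, hBz, hkz]
      ring
    have hknat : k ∣ c + h * B * n₀ := by
      have hcast : ((c + h * B * n₀ : ℕ) : ℤ) = (c : ℤ) + (B : ℤ) * (h : ℤ) * (n₀ : ℤ) := by
        push_cast; ring
      exact_mod_cast (show (k : ℤ) ∣ ((c + h * B * n₀ : ℕ) : ℤ) by rw [hcast]; exact hsol₀)
    obtain ⟨M, hM⟩ := hknat
    obtain ⟨e, he⟩ := hbk
    have hce : a * k / b = a * e := by
      rw [he, show a * (b * e) = b * (a * e) by ring, Nat.mul_div_cancel_left _ hb]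
    have hb0 : (b : ℝ) ≠ 0 := by exact_mod_cast hb.ne'
    have hk0 : (k : ℝ) ≠ 0 := by exact_mod_cast hk.ne'
    have hkr : (k : ℝ) = (b : ℝ) * (e : ℝ) := by exact_mod_cast he
    have hMr : (a : ℝ) * e + (A : ℝ) * h + (h : ℝ) * B * n₀ = (k : ℝ) * M := by
      have hM' : c + h * B * n₀ = k * M := hM
      rw [hc, hce] at hM'
      exact_mod_cast hM'
    have harg : (a : ℝ) / b + (h : ℝ) * ((A : ℝ) + (B : ℝ) * n₀) / k = ((M : ℕ) : ℝ) := by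
      rw [div_add_div _ _ hb0 hk0, div_eq_iff (mul_ne_zero hb0 hk0)]
      linear_combination (b : ℝ) * hMr + (a : ℝ) * hkr
    have hone : e2pi ((a : ℝ) / b) * e2pi ((h : ℝ) * ((A : ℝ) + (B : ℝ) * n₀) / k) = 1 := by
      rw [← e2pi_add, harg, e2pi_nat]
    refine ⟨n₀, hn₀Icc, hone, ?_⟩
    intro m hm
    rw [qPoch]
    apply Finset.prod_eq_zero (Finset.mem_range.mpr hm)
    have hsplit2 : (h : ℝ) * A / k + (n₀ : ℝ) * ((h : ℝ) * B / k)
        = (h : ℝ) * ((A : ℝ) + (B : ℝ) * n₀) / k := by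
      field_simp
    rw [e2pi_pow, mul_assoc, ← e2pi_add, hsplit2, hone]
    ring
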